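/- arXiv:2001.06975 — 9 statements merged into one kernel-verified Lean document; each statement's English description precedes it below -/
import Mathlib

section
/- If a diffusion auction mechanism (π, x) is incentive-compatible, then its decoupled payments are diffusion-monotonic: for every buyer i and diffusion sets r²_i ⊆ r¹_i (both subsets of r_i), x̃_i(r²_i) ≥ x̃_i(r¹_i) and x̄_i(r²_i) ≥ x̄_i(r¹_i). -/
/-!
Statement 3: In an IC diffusion auction, the decoupled payments are diffusion-monotonic:
for diffusion sets r² ⊆ r¹, x̃(r²) ≥ x̃(r¹) and x̄(r²) ≥ x̄(r¹).

Model: single buyer's view with a fixed environment. For each diffusion set `r'` she may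
report, `vstar r' ≥ 0` is her (finite) critical bid, `wins v' r' ↔ vstar r' ≤ v'` (value
monotonicity), and her bid-independent decoupled payments are `xw r'` (winning) and `xl r'`
(losing), satisfying x̃ − x̄ = v* (P3). IC: a buyer with any true type `(v, r)` (valuation
possibly arbitrarily large) prefers truth to any misreport `(v', r')` with `r' ⊆ r`.
-/
theorem stmt3 (wins : ℝ → Finset ℕ → Bool) (xw xl vstar : Finset ℕ → ℝ)
    (h0 : ∀ r' : Finset ℕ, 0 ≤ vstar r')
    (hwins : ∀ (v : ℝ) (r' : Finset ℕ), wins v r' = true ↔ vstar r' ≤ v)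
    (hP3 : ∀ r' : Finset ℕ, xw r' - xl r' = vstar r')
    (hIC : ∀ (v : ℝ) (r : Finset ℕ) (v' : ℝ) (r' : Finset ℕ),
      0 ≤ v → 0 ≤ v' → r' ⊆ r →
        ((if wins v r then v else 0) - (if wins v r then xw r else xl r)) ≥
        ((if wins v' r' then v else 0) - (if wins v' r' then xw r' else xl r'))) :
    ∀ r₁ r₂ : Finset ℕ, r₂ ⊆ r₁ → xw r₂ ≥ xw r₁ ∧ xl r₂ ≥ xl r₁ := by
  intro r₁ r₂ hsub
  set a := vstar r₁ with ha
  set b := vstar r₂ with hb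
  -- xw part, using v = max a b
  have hxw : xw r₂ ≥ xw r₁ := by
    have hv : (0:ℝ) ≤ max a b := le_trans (h0 r₁) (le_max_left _ _)
    have h1 : wins (max a b) r₁ = true := (hwins _ _).mpr (le_max_left _ _)
    have h2 : wins (max a b) r₂ = true := (hwins _ _).mpr (le_max_right _ _)
    have := hIC (max a b) r₁ (max a b) r₂ hv hv hsub
    rw [h1, h2] at this
    simp only [if_pos rfl, if_true] at this
    linarith
  refine ⟨hxw, ?_⟩
  by_cases hba : b ≤ a
  · have p1 := hP3 r₁
    have p2 := hP3 r₂
    linarith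
  · push_neg at hba
    have h1 : wins a r₁ = true := (hwins _ _).mpr le_rfl
    have h2 : wins a r₂ = false := by
      rw [← Bool.not_eq_true, hwins]
      exact not_le.mpr hba
    have := hIC a r₁ a r₂ (h0 r₁) (h0 r₁) hsub
    rw [h1, h2] at this
    simp only [Bool.false_eq_true, if_false, if_pos rfl, if_true] at this
    have p1 := hP3 r₁
    linarith
end

section
/- An incentive-compatible diffusion auction (π, x) is individually rational if and only if for every buyer i and every type profile, the losing payment under the empty diffusion set is non-positive: x̄_i(∅) ≤ 0. -/
/-!
Statement 5: An incentive-compatible diffusion auction is individually rational iff for every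
buyer and profile, the losing payment under the empty diffusion set is non-positive:
x̄(∅) ≤ 0.

Model: single buyer's view with fixed environment, where the mechanism satisfies the IC
characterization P1–P4: the buyer wins with report `(v', r')` iff `v' ≥ v* r'` (P1), her
payments are bid-independent decoupled payments `xw r'` / `xl r'` (P2), `xw − xl = v*` (P3),
and payments are diffusion-monotonic (P4). IR: for every true valuation `v ≥ 0`, every
neighbor set `r` and every diffusion choice `r' ⊆ r`, truthful-valuation reporting gives
nonnegative utility.
-/
theorem stmt5 (wins : ℝ → Finset ℕ → Bool) (xw xl vstar : Finset ℕ → ℝ)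
    (h0 : ∀ r' : Finset ℕ, 0 ≤ vstar r')
    (hP1 : ∀ (v : ℝ) (r' : Finset ℕ), wins v r' = true ↔ vstar r' ≤ v)
    (hP3 : ∀ r' : Finset ℕ, xw r' - xl r' = vstar r')
    (hP4 : ∀ r'' r' : Finset ℕ, r'' ⊆ r' → xw r'' ≥ xw r' ∧ xl r'' ≥ xl r') :
    (∀ (v : ℝ) (r r' : Finset ℕ), 0 ≤ v → r' ⊆ r →
        (if wins v r' then v - xw r' else -xl r') ≥ 0) ↔
      xl ∅ ≤ 0 := by
  constructor
  · intro hIR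
    have h := hIR 0 ∅ ∅ le_rfl (by simp)
    by_cases hw : wins 0 ∅ = true
    · rw [if_pos hw] at h
      have hv : vstar ∅ ≤ 0 := (hP1 0 ∅).mp hw
      have hv0 : vstar ∅ = 0 := le_antisymm hv (h0 ∅)
      have := hP3 ∅
      nlinarith
    · rw [if_neg hw] at h; linarith
  · intro hxl v r r' hv hsub
    have hxl' : xl r' ≤ 0 := le_trans ((hP4 ∅ r' (Finset.empty_subset _)).2) hxl
    by_cases hw : wins v r' = true
    · rw [if_pos hw]
      have hv' : vstar r' ≤ v := (hP1 v r').mp hw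
      have := hP3 r'
      linarith
    · rw [if_neg hw]; linarith
end

section
/- Every monotonic allocation policy for a diffusion auction is implementable: there exists a payment policy x such that the mechanism (π, x) is individually rational and incentive-compatible. In particular, for any α ≥ 0, the payments x̃_i(r'_i) = −α·v*_i(r'_i) + (1+α)·v*_i(∅) (when winning) and x̄_i(r'_i) = −(1+α)·v*_i(r'_i) + (1+α)·v*_i(∅) (when losing) satisfy properties P1–P5. -/
/-!
Statement 7: Every monotonic allocation policy is implementable: there is a payment policy
making the mechanism IR and IC. In particular, for any α ≥ 0, the payments
x̃(r') = −α·v*(r') + (1+α)·v*(∅) (winning) and x̄(r') = −(1+α)·v*(r') + (1+α)·v*(∅) (losing)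
satisfy P1–P5.

Model: single buyer's view with fixed environment. The monotonic allocation is given via its
critical-bid function: `wins v r' ↔ v* r' ≤ v` (value-monotonicity, P1) and `v*` is
non-decreasing under set inclusion (the consequence of allocation monotonicity).
-/
def utility (wins : ℝ → Finset ℕ → Bool) (pay : ℝ → Finset ℕ → ℝ)
    (v v' : ℝ) (r' : Finset ℕ) : ℝ :=
  (if wins v' r' then v else 0) - pay v' r'

def IC (wins : ℝ → Finset ℕ → Bool) (pay : ℝ → Finset ℕ → ℝ) : Prop :=
  ∀ (v : ℝ) (r : Finset ℕ) (v' : ℝ) (r' : Finset ℕ),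
    0 ≤ v → 0 ≤ v' → r' ⊆ r → utility wins pay v v r ≥ utility wins pay v v' r'

def IR (wins : ℝ → Finset ℕ → Bool) (pay : ℝ → Finset ℕ → ℝ) : Prop :=
  ∀ (v : ℝ) (r r' : Finset ℕ), 0 ≤ v → r' ⊆ r → utility wins pay v v r' ≥ 0

theorem stmt7 (wins : ℝ → Finset ℕ → Bool) (vstar : Finset ℕ → ℝ)
    (h0 : ∀ r' : Finset ℕ, 0 ≤ vstar r')
    (hP1 : ∀ (v : ℝ) (r' : Finset ℕ), wins v r' = true ↔ vstar r' ≤ v)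
    (hmono : ∀ r' r : Finset ℕ, r' ⊆ r → vstar r' ≤ vstar r) :
    (∃ pay : ℝ → Finset ℕ → ℝ, IR wins pay ∧ IC wins pay) ∧
    (∀ α : ℝ, 0 ≤ α →
      -- the decoupled payments from the payment policy
      (let xw : Finset ℕ → ℝ := fun r' => -α * vstar r' + (1 + α) * vstar ∅
       let xl : Finset ℕ → ℝ := fun r' => -(1 + α) * vstar r' + (1 + α) * vstar ∅
       let pay : ℝ → Finset ℕ → ℝ := fun v r' => if wins v r' then xw r' else xl r'
       -- P3
       (∀ r' : Finset ℕ, xw r' - xl r' = vstar r') ∧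
       -- P4
       (∀ r'' r' : Finset ℕ, r'' ⊆ r' → xw r'' ≥ xw r' ∧ xl r'' ≥ xl r') ∧
       -- P5
       xl ∅ ≤ 0 ∧
       -- IR and IC of the induced mechanism
       IR wins pay ∧ IC wins pay)) := by

  have key : ∀ α : ℝ, 0 ≤ α →
      IR wins (fun v r' => if wins v r' then -α * vstar r' + (1 + α) * vstar ∅
        else -(1 + α) * vstar r' + (1 + α) * vstar ∅) ∧
      IC wins (fun v r' => if wins v r' then -α * vstar r' + (1 + α) * vstar ∅
        else -(1 + α) * vstar r' + (1 + α) * vstar ∅) := by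
    intro α hα
    constructor
    · intro v r r' hv hsub
      have h1 := hmono ∅ r' (Finset.empty_subset r')
      simp only [utility, ge_iff_le]
      by_cases hw : wins v r' = true
      · have hv' := (hP1 v r').mp hw
        simp only [hw, if_true]
        nlinarith
      · have hv' : ¬ vstar r' ≤ v := fun h => hw ((hP1 v r').mpr h)
        rw [if_neg hw, if_neg hw]
        nlinarith [not_le.mp hv']
    · intro v r v' r' hv hv' hsub
      have h1 := hmono ∅ r' (Finset.empty_subset r')
      have h2 := hmono r' r hsub
      have h3 := hmono ∅ r (Finset.empty_subset r)
      simp only [utility, ge_iff_le]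
      by_cases hw : wins v r = true <;> by_cases hw2 : wins v' r' = true <;>
        first
          | (rw [if_pos hw, if_pos hw, if_pos hw2, if_pos hw2])
          | (rw [if_pos hw, if_pos hw, if_neg hw2, if_neg hw2])
          | (rw [if_neg hw, if_neg hw, if_pos hw2, if_pos hw2])
          | (rw [if_neg hw, if_neg hw, if_neg hw2, if_neg hw2])
      · have a1 := (hP1 v r).mp hw
        nlinarith
      · have a1 := (hP1 v r).mp hw
        nlinarith
      · have a1 : v < vstar r := not_le.mp (fun h => hw ((hP1 v r).mpr h))
        nlinarith
      · have a1 : v < vstar r := not_le.mp (fun h => hw ((hP1 v r).mpr h))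
        nlinarith
  constructor
  · exact ⟨_, key 0 le_rfl⟩
  · intro α hα
    refine ⟨fun r' => by ring, fun r'' r' hs => ?_, by ring_nf; simp, (key α hα).1, (key α hα).2⟩
    have := hmono r'' r' hs
    constructor <;> · dsimp only; nlinarith
end

section
/- Given any monotonic allocation policy π, the payment policy x*_i = v*_i(∅) − v*_i(r_i)·(1 − π_i(t)) (i.e., a winner pays v*_i(∅) and a loser pays v*_i(∅) − v*_i(r_i)) is optimal: among all payment policies x for which (π, x) is individually rational and incentive-compatible, x* maximizes the seller's revenue Rev = Σ_i x_i(t) at every type profile t. -/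
/-- The proposed optimal payment: `v*(∅) − v*(r)·(1 − π)`. -/
noncomputable def paystar (wins : ℝ → Finset ℕ → Bool) (vstar : Finset ℕ → ℝ)
    (v : ℝ) (r : Finset ℕ) : ℝ :=
  vstar ∅ - vstar r * (1 - (if wins v r then 1 else 0))

section Aux

variable {W : ℝ → Finset ℕ → Bool} {V : Finset ℕ → ℝ}

lemma aux_lose_lt (hP1 : ∀ v r', W v r' = true ↔ V r' ≤ v)
    {v : ℝ} {r : Finset ℕ} (hb : W v r = false) : v < V r := by
  have h : ¬ V r ≤ v := by simpa [hb] using (hP1 v r)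
  exact lt_of_not_ge h

lemma aux_win_pay (h0 : ∀ r, 0 ≤ V r)
    (hmono : ∀ r' r, r' ⊆ r → V r' ≤ V r)
    (hP1 : ∀ v r', W v r' = true ↔ V r' ≤ v)
    (pay : ℝ → Finset ℕ → ℝ) (hIR : IR W pay) (hIC : IC W pay)
    (v : ℝ) (r : Finset ℕ) (hv : 0 ≤ v) (hw : W v r = true) : pay v r ≤ V ∅ := by
  have hVr : V r ≤ v := (hP1 v r).mp hw
  have hV0r : V ∅ ≤ V r := hmono ∅ r (Finset.empty_subset r)
  have hwin0 : W v ∅ = true := (hP1 v ∅).mpr (le_trans hV0r hVr)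
  have h1 : pay v r ≤ pay v ∅ := by
    have h := hIC v r v ∅ hv hv (Finset.empty_subset r)
    simp [utility, hw, hwin0] at h
    linarith
  have hwinV0 : W (V ∅) ∅ = true := (hP1 _ _).mpr le_rfl
  have h2 : pay v ∅ ≤ pay (V ∅) ∅ := by
    have h := hIC v ∅ (V ∅) ∅ hv (h0 ∅) (Finset.Subset.refl _)
    simp [utility, hwin0, hwinV0] at h
    linarith
  have h3 : pay (V ∅) ∅ ≤ V ∅ := by
    have hw0 : (0:ℝ) ≤ V ∅ / 2 := by have := h0 ∅; linarith
    have hic := hIC (V ∅) ∅ (V ∅ / 2) ∅ (h0 ∅) hw0 (Finset.Subset.refl _)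
    have hir := hIR (V ∅ / 2) ∅ ∅ hw0 (Finset.Subset.refl _)
    by_cases hc : W (V ∅ / 2) ∅ = true
    · have hle : V ∅ ≤ V ∅ / 2 := (hP1 _ _).mp hc
      have hV0 : V ∅ = 0 := le_antisymm (by linarith) (h0 ∅)
      simp [utility, hwinV0, hc] at hic hir
      linarith
    · have hc' : W (V ∅ / 2) ∅ = false := by
        simpa using hc
      simp [utility, hwinV0, hc'] at hic hir
      linarith
  linarith

lemma aux_lose_pay (h0 : ∀ r, 0 ≤ V r)
    (hmono : ∀ r' r, r' ⊆ r → V r' ≤ V r)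
    (hP1 : ∀ v r', W v r' = true ↔ V r' ≤ v)
    (pay : ℝ → Finset ℕ → ℝ) (hIR : IR W pay) (hIC : IC W pay)
    (v : ℝ) (r : Finset ℕ) (hv : 0 ≤ v) (hw : W v r = false) :
    pay v r ≤ V ∅ - V r := by
  have hvlt : v < V r := aux_lose_lt hP1 hw
  have hVrpos : 0 < V r := lt_of_le_of_lt hv hvlt
  have hwu : W (V r) r = true := (hP1 _ _).mpr le_rfl
  have hupay : pay (V r) r ≤ V ∅ :=
    aux_win_pay h0 hmono hP1 pay hIR hIC (V r) r (h0 r) hwu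
  have key : ∀ w : ℝ, 0 ≤ w → w < V r → w ≤ pay (V r) r - pay v r := by
    intro w hw0 hwlt
    have hwl : W w r = false := by
      by_contra hc
      have hc' : W w r = true := by simpa using hc
      exact absurd ((hP1 _ _).mp hc') (not_le.mpr hwlt)
    have h1 : pay v r ≤ pay w r := by
      have h := hIC v r w r hv hw0 (Finset.Subset.refl r)
      simp [utility, hw, hwl] at h
      linarith
    have h2 : pay w r ≤ pay (V r) r - w := by
      have h := hIC w r (V r) r hw0 (h0 r) (Finset.Subset.refl r)
      simp [utility, hwl, hwu] at h
      linarith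
    linarith
  have hfin : V r ≤ pay (V r) r - pay v r := by
    by_contra hcon
    push_neg at hcon
    have h0X : (0:ℝ) ≤ pay (V r) r - pay v r := key 0 le_rfl hVrpos
    have hww := key ((pay (V r) r - pay v r + V r) / 2) (by linarith) (by linarith)
    linarith
  linarith

lemma aux_opt (h0 : ∀ r, 0 ≤ V r)
    (hmono : ∀ r' r, r' ⊆ r → V r' ≤ V r)
    (hP1 : ∀ v r', W v r' = true ↔ V r' ≤ v)
    (pay : ℝ → Finset ℕ → ℝ) (hIR : IR W pay) (hIC : IC W pay)
    (v : ℝ) (r : Finset ℕ) (hv : 0 ≤ v) :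
    pay v r ≤ paystar W V v r := by
  cases hb : W v r with
  | false =>
    have h := aux_lose_pay h0 hmono hP1 pay hIR hIC v r hv hb
    simp [paystar, hb]
    linarith
  | true =>
    have h := aux_win_pay h0 hmono hP1 pay hIR hIC v r hv hb
    simp [paystar, hb]
    linarith

lemma paystar_IR (hmono : ∀ r' r, r' ⊆ r → V r' ≤ V r)
    (hP1 : ∀ v r', W v r' = true ↔ V r' ≤ v) : IR W (paystar W V) := by
  intro v r r' hv _
  have h0r' : V ∅ ≤ V r' := hmono ∅ r' (Finset.empty_subset _)
  cases hb : W v r' with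
  | false =>
    simp [utility, paystar, hb]
    linarith
  | true =>
    have hle : V r' ≤ v := (hP1 _ _).mp hb
    simp [utility, paystar, hb]
    linarith

lemma paystar_IC (hmono : ∀ r' r, r' ⊆ r → V r' ≤ V r)
    (hP1 : ∀ v r', W v r' = true ↔ V r' ≤ v) : IC W (paystar W V) := by
  intro v r v' r' hv hv' hsub
  have hrr' : V r' ≤ V r := hmono r' r hsub
  cases hb : W v r with
  | false =>
    have hlt : v < V r := aux_lose_lt hP1 hb
    cases hb' : W v' r' with
    | false => simp [utility, paystar, hb, hb']; linarith
    | true => simp [utility, paystar, hb, hb']; linarith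
  | true =>
    have hle : V r ≤ v := (hP1 _ _).mp hb
    cases hb' : W v' r' with
    | false => simp [utility, paystar, hb, hb']; linarith
    | true => simp [utility, paystar, hb, hb']

end Aux

theorem stmt8 {ι : Type*} [Fintype ι]
    (wins : ι → ℝ → Finset ℕ → Bool) (vstar : ι → Finset ℕ → ℝ)
    (h0 : ∀ (i : ι) (r' : Finset ℕ), 0 ≤ vstar i r')
    (hmono : ∀ (i : ι) (r' r : Finset ℕ), r' ⊆ r → vstar i r' ≤ vstar i r)
    (hP1 : ∀ (i : ι) (v : ℝ) (r' : Finset ℕ), wins i v r' = true ↔ vstar i r' ≤ v) :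
    (∀ i : ι, IR (wins i) (paystar (wins i) (vstar i)) ∧
              IC (wins i) (paystar (wins i) (vstar i))) ∧
    (∀ pay : ι → ℝ → Finset ℕ → ℝ,
      (∀ i : ι, IR (wins i) (pay i) ∧ IC (wins i) (pay i)) →
      ∀ t : ι → ℝ × Finset ℕ, (∀ i : ι, 0 ≤ (t i).1) →
        ∑ i : ι, pay i (t i).1 (t i).2 ≤
          ∑ i : ι, paystar (wins i) (vstar i) (t i).1 (t i).2) := by
  constructor
  · intro i
    exact ⟨paystar_IR (hmono i) (hP1 i), paystar_IC (hmono i) (hP1 i)⟩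
  · intro pay hpay t ht
    apply Finset.sum_le_sum
    intro i _
    exact aux_opt (h0 i) (hmono i) (hP1 i) (pay i) (hpay i).1 (hpay i).2 _ _ (ht i)
end

section
/- Under the constraints (1) x̄_i bid-independent, (2) x̃_i(r_i) = x̄_i(r_i) + v*_i(r_i), (3) x̄_i(r_i) + v*_i(r_i) ≤ x̄_i(r'_i) + v*_i(r'_i) for all r'_i ⊆ r_i, and (4) x̄_i(∅) ≤ 0, the losing payment is bounded: x̄_i(r_i) ≤ v*_i(∅) − v*_i(r_i); and this bound is attained by the feasible solution x̄_i(r'_i) = v*_i(∅) − v*_i(r'_i), x̃_i(r'_i) = v*_i(∅), provided v*_i is non-decreasing under set inclusion. -/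
/-!
Statement 9: Under the optimization constraints (1)–(4), the losing payment is bounded:
x̄(r) ≤ v*(∅) − v*(r); and the bound is attained by the feasible solution
x̄(r') = v*(∅) − v*(r'), x̃(r') = v*(∅), provided v* is non-decreasing under set inclusion.

Model: fix buyer `i` with neighbor set `r`; `vstar : Finset ℕ → ℝ` is her critical-bid
function (nonnegative, non-decreasing under inclusion). Bid-independence (constraint (1)) is
built in since the decoupled payments depend only on the diffusion set; constraint (2)
defines x̃ from x̄.
-/
theorem stmt9 (vstar : Finset ℕ → ℝ) (r : Finset ℕ)
    (h0 : ∀ r' : Finset ℕ, 0 ≤ vstar r')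
    (hmono : ∀ r' r'' : Finset ℕ, r' ⊆ r'' → vstar r' ≤ vstar r'') :
    -- the bound
    (∀ xl : Finset ℕ → ℝ,
      (∀ r' : Finset ℕ, r' ⊆ r → xl r + vstar r ≤ xl r' + vstar r') →  -- constraint (3)
      xl ∅ ≤ 0 →                                                        -- constraint (4)
      xl r ≤ vstar ∅ - vstar r) ∧
    -- attainment by the feasible solution x̄(r') = v*(∅) − v*(r'), x̃(r') = v*(∅)
    (let xl : Finset ℕ → ℝ := fun r' => vstar ∅ - vstar r'
     let xw : Finset ℕ → ℝ := fun _ => vstar ∅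
     (∀ r' : Finset ℕ, xw r' = xl r' + vstar r') ∧                       -- constraint (2)
     (∀ r' : Finset ℕ, r' ⊆ r → xl r + vstar r ≤ xl r' + vstar r') ∧    -- constraint (3)
     xl ∅ ≤ 0 ∧                                                          -- constraint (4)
     xl r = vstar ∅ - vstar r) := by
  refine ⟨fun xl h3 h4 => ?_, fun r' => by ring, fun r' hr => ?_, by simp, rfl⟩
  · have := h3 ∅ (Finset.empty_subset r)
    linarith
  · simp
end

section
/- If a diffusion auction mechanism satisfies P1–P4 (value-monotonic allocation, bid-independent decoupled payments, x̃_i(r'_i) − x̄_i(r'_i) = v*_i(r'_i), and diffusion-monotonic payments), then no winner under truthful reporting can strictly benefit from any misreport that makes her lose: for all r'_i ⊆ r_i, if v_i ≥ v*_i(r_i), then v_i − x̃_i(r_i) ≥ −x̄_i(r'_i). -/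
/-!
Statement 12: If a diffusion auction mechanism satisfies P1–P4, then no winner under
truthful reporting can strictly benefit from a misreport that makes her lose: for all
r' ⊆ r, if v ≥ v*(r), then v − x̃(r) ≥ −x̄(r').

Model: single buyer of type `(v, r)` with fixed environment; `xw`/`xl` are her
bid-independent decoupled payments (P2 is built in) and `vstar` her (nonnegative) critical
bids; by P1 she wins with diffusion `r'` iff her bid is at least `vstar r'`.
-/
theorem stmt12 (xw xl vstar : Finset ℕ → ℝ)
    (h0 : ∀ r' : Finset ℕ, 0 ≤ vstar r')
    (hP3 : ∀ r' : Finset ℕ, xw r' - xl r' = vstar r')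
    (hP4 : ∀ r'' r' : Finset ℕ, r'' ⊆ r' → xw r'' ≥ xw r' ∧ xl r'' ≥ xl r') :
    ∀ (v : ℝ) (r r' : Finset ℕ), r' ⊆ r → vstar r ≤ v →
      v - xw r ≥ -xl r' := by
  intro v r r' hsub hv
  have h := (hP4 r' r hsub).2
  have h3 := hP3 r
  linarith
end

section
/- If a diffusion auction mechanism satisfies P1–P4, then no loser under truthful reporting can strictly benefit from any misreport that makes her win: for all r'_i ⊆ r_i, if v_i < v*_i(r_i), then −x̄_i(r_i) ≥ v_i − x̃_i(r'_i). -/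
/-!
Statement 13: If a diffusion auction mechanism satisfies P1–P4, then no loser under truthful
reporting can strictly benefit from a misreport that makes her win: for all r' ⊆ r, if
v < v*(r), then −x̄(r) ≥ v − x̃(r').

Model: single buyer of type `(v, r)` with fixed environment; bid-independent decoupled
payments `xw`/`xl` and critical bids `vstar ≥ 0`; P1 implies winning with diffusion `r'`
requires a bid ≥ `vstar r'` and that `vstar` is non-decreasing under set inclusion.
-/
theorem stmt13 (xw xl vstar : Finset ℕ → ℝ)
    (h0 : ∀ r' : Finset ℕ, 0 ≤ vstar r')
    (hmono : ∀ r' r : Finset ℕ, r' ⊆ r → vstar r' ≤ vstar r)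
    (hP3 : ∀ r' : Finset ℕ, xw r' - xl r' = vstar r')
    (hP4 : ∀ r'' r' : Finset ℕ, r'' ⊆ r' → xw r'' ≥ xw r' ∧ xl r'' ≥ xl r') :
    ∀ (v : ℝ) (r r' : Finset ℕ), r' ⊆ r → v < vstar r →
      -xl r ≥ v - xw r' := by
  intro v r r' hsub hv
  have h1 := (hP4 r' r hsub).1
  have h2 := hP3 r
  linarith
end

section
/- Under an IC diffusion auction satisfying P1–P4, buyer i's utility from any report (v'_i, r'_i) with r'_i ⊆ r_i is minimized (over all reports) at value −x̄_i(∅), attained by reporting the empty diffusion set with a losing bid; consequently the mechanism is IR iff x̄_i(∅) ≤ 0 for all i and all profiles. -/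
/-!
Statement 14: Under an IC diffusion auction satisfying P1–P4, buyer i's utility from any
report (v', r') with r' ⊆ r is minimized over all reports at value −x̄(∅), attained by
reporting the empty diffusion set with a losing bid; consequently the mechanism is IR iff
x̄(∅) ≤ 0.

Model: single buyer with neighbor set `r`, bid-independent decoupled payments `xw`/`xl` and
nonnegative critical bids `vstar`, with P3 (`xw − xl = vstar`) and P4 (diffusion
monotonicity); by P1 a report `(v', r')` wins iff `vstar r' ≤ v'`, so (using P3) the
utility expression from the paper's minimization is
`π·(v' − vstar r') − xl r'`, and IR requires the truthful-valuation utility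
`π·(v − vstar r') − xl r' ≥ 0` for all valuations `v ≥ 0` and all `r' ⊆ r`.
-/
theorem stmt14 (xw xl vstar : Finset ℕ → ℝ) (r : Finset ℕ)
    (h0 : ∀ r' : Finset ℕ, 0 ≤ vstar r')
    (hP3 : ∀ r' : Finset ℕ, xw r' - xl r' = vstar r')
    (hP4 : ∀ r'' r' : Finset ℕ, r'' ⊆ r' → xw r'' ≥ xw r' ∧ xl r'' ≥ xl r') :
    -- lower bound over all reports
    (∀ (v' : ℝ) (r' : Finset ℕ), 0 ≤ v' → r' ⊆ r →
      ((if vstar r' ≤ v' then v' - vstar r' else 0) - xl r') ≥ -xl ∅) ∧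
    -- attained at the empty diffusion set with a losing bid
    (∃ (v' : ℝ) (r' : Finset ℕ), 0 ≤ v' ∧ r' ⊆ r ∧
      ((if vstar r' ≤ v' then v' - vstar r' else 0) - xl r') = -xl ∅) ∧
    -- IR iff x̄(∅) ≤ 0
    ((∀ (v : ℝ) (r' : Finset ℕ), 0 ≤ v → r' ⊆ r →
        ((if vstar r' ≤ v then v - vstar r' else 0) - xl r') ≥ 0) ↔
      xl ∅ ≤ 0) := by
  have key : ∀ (v' : ℝ) (r' : Finset ℕ), 0 ≤ v' → r' ⊆ r →
      ((if vstar r' ≤ v' then v' - vstar r' else 0) - xl r') ≥ -xl ∅ := by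
    intro v' r' hv hr
    have hxl : xl ∅ ≥ xl r' := (hP4 ∅ r' (Finset.empty_subset r')).2
    have h1 : (if vstar r' ≤ v' then v' - vstar r' else 0) ≥ 0 := by
      split <;> linarith
    linarith
  refine ⟨key, ⟨0, ∅, le_refl 0, Finset.empty_subset r, ?_⟩, ?_⟩
  · have := h0 ∅
    split
    · have : vstar ∅ = 0 := by linarith [h0 ∅]; 
      linarith
    · ring
  · constructor
    · intro h
      have := h 0 ∅ (le_refl 0) (Finset.empty_subset r)
      split at this <;> linarith [h0 ∅]
    · intro h v r' hv hr
      have := key v r' hv hr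
      linarith
end

section
/- Under the revenue-optimal payment policy x*_i = v*_i(∅) − v*_i(r_i)·(1 − π_i(t)) for a monotonic allocation π, every buyer's payment is fully determined by her critical-bid function, and the seller's revenue at truthful profile t equals v*_w(r_w) + Σ_{i ∈ N_{-s}} (v*_i(∅) − v*_i(r_i)), where w is the winner; moreover each loser's payment v*_i(∅) − v*_i(r_i) is non-positive (losers receive non-negative rewards). -/
/-!
Statement 15: Under the revenue-optimal payment x*_i = v*_i(∅) − v*_i(r_i)·(1 − π_i(t)) for
a monotonic allocation with exactly one winner `w` at the truthful profile, the seller's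
revenue equals v*_w(r_w) + Σ_i (v*_i(∅) − v*_i(r_i)), and each loser's payment
v*_i(∅) − v*_i(r_i) is non-positive (losers receive non-negative rewards).

Model: buyers `ι` (finite), critical-bid functions `vstar i` (nonnegative, finite, and
non-decreasing under set inclusion by allocation monotonicity), truthful diffusion sets
`r i`, winner `w`, and payments `pay i = v*_i(∅) − v*_i(r i)·(1 − π_i)` with `π_i = 1` iff
`i = w`.
-/
theorem stmt15 {ι : Type*} [Fintype ι] [DecidableEq ι]
    (vstar : ι → Finset ℕ → ℝ) (r : ι → Finset ℕ) (w : ι) (pay : ι → ℝ)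
    (h0 : ∀ (i : ι) (r' : Finset ℕ), 0 ≤ vstar i r')
    (hmono : ∀ (i : ι) (r' r'' : Finset ℕ), r' ⊆ r'' → vstar i r' ≤ vstar i r'')
    (hpay : ∀ i : ι,
      pay i = vstar i ∅ - vstar i (r i) * (1 - (if i = w then 1 else 0))) :
    -- the revenue decomposition
    (∑ i : ι, pay i) = vstar w (r w) + ∑ i : ι, (vstar i ∅ - vstar i (r i)) ∧
    -- each loser's payment is non-positive
    (∀ i : ι, i ≠ w → pay i ≤ 0) := by
  constructor
  · have key : ∀ i : ι, pay i =
        (vstar i ∅ - vstar i (r i)) + (if i = w then vstar i (r i) else 0) := by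
      intro i
      rw [hpay i]
      by_cases h : i = w <;> simp [h] <;> ring
    simp only [key]
    rw [Finset.sum_add_distrib, Finset.sum_ite_eq' Finset.univ w
      (fun i => vstar i (r i))]
    simp [add_comm]
  · intro i hi
    rw [hpay i, if_neg hi]
    have := hmono i ∅ (r i) (Finset.empty_subset _)
    linarith
end
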